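/- Let B be a ℤ-graded bialgebra over a field k satisfying the twisting conditions, and let {α_i : B → k}_{i∈ℤ} be a family of linear functionals, each convolution invertible with inverse α_i^{-1}. Then the following are equivalent: (1) {α_i}_{i∈ℤ} is a system of twisting functionals on B; (2) the maps τ_i := Ξ^r[α_i] (i ∈ ℤ) form a twisting system of B, in which case each τ_i is bijective with inverse Ξ^r[α_i^{-1}]; (3) the maps τ_i := Ξ^l[α_i^{-1}] (i ∈ ℤ) form a twisting system of B, in which case each τ_i is bijective with inverse Ξ^l[α_i]. -/
import Mathlib

open TensorProduct

/-- Convolution product of linear functionals on a coalgebra. -/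
noncomputable def conv {k B : Type*} [CommSemiring k] [AddCommMonoid B] [Module k B]
    [Coalgebra k B] (f g : B →ₗ[k] k) : B →ₗ[k] k :=
  LinearMap.mul' k k ∘ₗ TensorProduct.map f g ∘ₗ Coalgebra.comul

/-- The right winding map `Ξ^r[π](b) = Σ b_1 π(b_2)`. -/
noncomputable def windR {k B : Type*} [CommSemiring k] [AddCommMonoid B] [Module k B]
    [Coalgebra k B] (π : B →ₗ[k] k) : B →ₗ[k] B :=
  (TensorProduct.rid k B).toLinearMap ∘ₗ TensorProduct.map LinearMap.id π ∘ₗ Coalgebra.comul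

/-- The left winding map `Ξ^l[π](b) = Σ π(b_1) b_2`. -/
noncomputable def windL {k B : Type*} [CommSemiring k] [AddCommMonoid B] [Module k B]
    [Coalgebra k B] (π : B →ₗ[k] k) : B →ₗ[k] B :=
  (TensorProduct.lid k B).toLinearMap ∘ₗ TensorProduct.map π LinearMap.id ∘ₗ Coalgebra.comul

/-- A system of twisting functionals on a ℤ-graded bialgebra `B`. -/
def IsTwistingFunctionalSystem {k B : Type*} [CommSemiring k] [Semiring B] [Bialgebra k B]
    (𝒜 : ℤ → Submodule k B) (α : ℤ → (B →ₗ[k] k)) : Prop :=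
  (∀ i : ℤ, ∃ αinv : B →ₗ[k] k, conv (α i) αinv = Coalgebra.counit ∧
    conv αinv (α i) = Coalgebra.counit) ∧
  (∀ i : ℤ, α i 1 = 1) ∧
  (α 0 = Coalgebra.counit) ∧
  (∀ (i j : ℤ), ∀ a ∈ 𝒜 j, ∀ b : B,
    conv ((α i) ∘ₗ LinearMap.mulLeft k a) (α j) b = α i a * α (i + j) b)

/-- A twisting system of a ℤ-graded algebra. -/
def IsTwistingSystem {k A : Type*} [CommSemiring k] [Semiring A] [Algebra k A]
    (𝒜 : ℤ → Submodule k A) (τ : ℤ → (A →ₗ[k] A)) : Prop :=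
  (∀ i : ℤ, Function.Bijective (τ i)) ∧
  (∀ (i n : ℤ), ∀ a ∈ 𝒜 n, τ i a ∈ 𝒜 n) ∧
  (τ 0 = LinearMap.id) ∧
  (∀ i : ℤ, τ i 1 = 1) ∧
  (∀ (i j : ℤ), ∀ a ∈ 𝒜 j, ∀ b : A, τ i (a * τ j b) = τ i a * τ (i + j) b)

/-! ### Auxiliary lemmas -/

open Coalgebra

section CoalgLemmas

variable {k B : Type*} [CommSemiring k] [AddCommMonoid B] [Module k B] [Coalgebra k B]

private lemma conv_apply_of {ι : Type*} {S : Finset ι} {x y : ι → B} {b : B}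
    (h : ∑ i ∈ S, x i ⊗ₜ[k] y i = Coalgebra.comul b) (f g : B →ₗ[k] k) :
    conv f g b = ∑ i ∈ S, f (x i) * g (y i) := by
  simp only [conv, LinearMap.comp_apply, ← h, map_sum, TensorProduct.map_tmul,
    LinearMap.mul'_apply]

private lemma windR_apply_of {ι : Type*} {S : Finset ι} {x y : ι → B} {b : B}
    (h : ∑ i ∈ S, x i ⊗ₜ[k] y i = Coalgebra.comul b) (f : B →ₗ[k] k) :
    windR f b = ∑ i ∈ S, f (y i) • x i := by
  simp only [windR, LinearMap.comp_apply, ← h, map_sum, TensorProduct.map_tmul,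
    LinearEquiv.coe_coe, TensorProduct.rid_tmul, LinearMap.id_coe, id_eq]

private lemma windL_apply_of {ι : Type*} {S : Finset ι} {x y : ι → B} {b : B}
    (h : ∑ i ∈ S, x i ⊗ₜ[k] y i = Coalgebra.comul b) (f : B →ₗ[k] k) :
    windL f b = ∑ i ∈ S, f (x i) • y i := by
  simp only [windL, LinearMap.comp_apply, ← h, map_sum, TensorProduct.map_tmul,
    LinearEquiv.coe_coe, TensorProduct.lid_tmul, LinearMap.id_coe, id_eq]

private lemma sum_counit_right_smul {ι : Type*} {S : Finset ι} {x y : ι → B} {b : B}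
    (h : ∑ i ∈ S, x i ⊗ₜ[k] y i = Coalgebra.comul b) :
    ∑ i ∈ S, Coalgebra.counit (R := k) (y i) • x i = b := by
  have h2 := congrArg (fun z => (TensorProduct.rid k B)
    ((LinearMap.lTensor B (Coalgebra.counit (R := k))) z)) h
  simpa [map_sum] using h2

private lemma sum_counit_left_smul {ι : Type*} {S : Finset ι} {x y : ι → B} {b : B}
    (h : ∑ i ∈ S, x i ⊗ₜ[k] y i = Coalgebra.comul b) :
    ∑ i ∈ S, Coalgebra.counit (R := k) (x i) • y i = b := by
  have h2 := congrArg (fun z => (TensorProduct.lid k B)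
    ((LinearMap.rTensor B (Coalgebra.counit (R := k))) z)) h
  simpa [map_sum] using h2

private lemma conv_counit_right (f : B →ₗ[k] k) : conv f Coalgebra.counit = f := by
  ext b
  rw [conv_apply_of (ℛ k b).eq f Coalgebra.counit]
  conv_rhs => rw [← sum_counit_right_smul (ℛ k b).eq]
  simp [mul_comm]

private lemma conv_counit_left (f : B →ₗ[k] k) : conv Coalgebra.counit f = f := by
  ext b
  rw [conv_apply_of (ℛ k b).eq Coalgebra.counit f]
  conv_rhs => rw [← sum_counit_left_smul (ℛ k b).eq]
  simp

private lemma windR_counit : windR (Coalgebra.counit (R := k) (A := B)) = LinearMap.id := by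
  ext b
  rw [LinearMap.id_coe, id_eq, windR_apply_of (ℛ k b).eq]
  exact sum_counit_right_smul (ℛ k b).eq

private lemma windL_counit : windL (Coalgebra.counit (R := k) (A := B)) = LinearMap.id := by
  ext b
  rw [LinearMap.id_coe, id_eq, windL_apply_of (ℛ k b).eq]
  exact sum_counit_left_smul (ℛ k b).eq

private lemma comp_windR (f g : B →ₗ[k] k) : f ∘ₗ windR g = conv f g := by
  ext b
  rw [LinearMap.comp_apply, windR_apply_of (ℛ k b).eq, conv_apply_of (ℛ k b).eq]
  simp [mul_comm]

private lemma comp_windL (f g : B →ₗ[k] k) : f ∘ₗ windL g = conv g f := by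
  ext b
  rw [LinearMap.comp_apply, windL_apply_of (ℛ k b).eq, conv_apply_of (ℛ k b).eq]
  simp

private lemma conv_smul_left (c : k) (f g : B →ₗ[k] k) :
    conv (c • f) g = c • conv f g := by
  ext b
  simp [conv_apply_of (ℛ k b).eq, Finset.mul_sum, mul_assoc]

private lemma conv_smul_right (c : k) (f g : B →ₗ[k] k) :
    conv f (c • g) = c • conv f g := by
  ext b
  simp [conv_apply_of (ℛ k b).eq, Finset.mul_sum, mul_left_comm]

private lemma conv_sum_right {ι : Type*} (S : Finset ι) (f : B →ₗ[k] k) (g : ι → (B →ₗ[k] k)) :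
    conv f (∑ t ∈ S, g t) = ∑ t ∈ S, conv f (g t) := by
  ext b
  simp only [conv_apply_of (ℛ k b).eq, LinearMap.sum_apply, LinearMap.coe_sum,
    Finset.sum_apply, Finset.mul_sum]
  exact Finset.sum_comm

private lemma conv_sum_left {ι : Type*} (S : Finset ι) (f : B →ₗ[k] k) (g : ι → (B →ₗ[k] k)) :
    conv (∑ t ∈ S, g t) f = ∑ t ∈ S, conv (g t) f := by
  ext b
  simp only [conv_apply_of (ℛ k b).eq, LinearMap.sum_apply, LinearMap.coe_sum,
    Finset.sum_apply, Finset.sum_mul]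
  exact Finset.sum_comm

private lemma windR_smul (c : k) (f : B →ₗ[k] k) : windR (c • f) = c • windR f := by
  ext b
  simp [windR_apply_of (ℛ k b).eq, Finset.smul_sum, smul_smul]

private lemma windL_smul (c : k) (f : B →ₗ[k] k) : windL (c • f) = c • windL f := by
  ext b
  simp [windL_apply_of (ℛ k b).eq, Finset.smul_sum, smul_smul]

private lemma conv_assoc (f g h : B →ₗ[k] k) : conv (conv f g) h = conv f (conv g h) := by
  ext b
  have H := Coalgebra.sum_tmul_tmul_eq (R := k) (ℛ k b)
    (fun i => ℛ k ((ℛ k b).left i)) (fun i => ℛ k ((ℛ k b).right i))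
  have H2 := congrArg (LinearMap.mul' k k ∘ₗ
    TensorProduct.map f (LinearMap.mul' k k ∘ₗ TensorProduct.map g h)) H
  simp only [map_sum, LinearMap.comp_apply, TensorProduct.map_tmul, LinearMap.mul'_apply] at H2
  rw [conv_apply_of (ℛ k b).eq, conv_apply_of (ℛ k b).eq]
  calc ∑ i ∈ (ℛ k b).index, conv f g ((ℛ k b).left i) * h ((ℛ k b).right i)
      = ∑ i ∈ (ℛ k b).index, ∑ j ∈ (ℛ k ((ℛ k b).left i)).index,
          f ((ℛ k ((ℛ k b).left i)).left j) *
            (g ((ℛ k ((ℛ k b).left i)).right j) * h ((ℛ k b).right i)) := by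
        refine Finset.sum_congr rfl fun i _ => ?_
        rw [conv_apply_of (ℛ k ((ℛ k b).left i)).eq, Finset.sum_mul]
        simp [mul_assoc]
    _ = ∑ i ∈ (ℛ k b).index, ∑ j ∈ (ℛ k ((ℛ k b).right i)).index,
          f ((ℛ k b).left i) *
            (g ((ℛ k ((ℛ k b).right i)).left j) * h ((ℛ k ((ℛ k b).right i)).right j)) := H2
    _ = ∑ i ∈ (ℛ k b).index, f ((ℛ k b).left i) * conv g h ((ℛ k b).right i) := by
        refine Finset.sum_congr rfl fun i _ => ?_
        rw [conv_apply_of (ℛ k ((ℛ k b).right i)).eq, Finset.mul_sum]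

private lemma windR_comp_windR (f g : B →ₗ[k] k) :
    windR f ∘ₗ windR g = windR (conv f g) := by
  ext b
  have H := Coalgebra.sum_tmul_tmul_eq (R := k) (ℛ k b)
    (fun i => ℛ k ((ℛ k b).left i)) (fun i => ℛ k ((ℛ k b).right i))
  have H2 := congrArg ((TensorProduct.rid k B).toLinearMap ∘ₗ
    TensorProduct.map LinearMap.id (LinearMap.mul' k k ∘ₗ TensorProduct.map f g)) H
  simp only [map_sum, LinearMap.comp_apply, TensorProduct.map_tmul, LinearMap.mul'_apply,
    LinearEquiv.coe_coe, TensorProduct.rid_tmul, LinearMap.id_coe, id_eq] at H2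
  rw [LinearMap.comp_apply, windR_apply_of (ℛ k b).eq, map_sum,
    windR_apply_of (ℛ k b).eq (conv f g)]
  calc ∑ i ∈ (ℛ k b).index, windR f (g ((ℛ k b).right i) • (ℛ k b).left i)
      = ∑ i ∈ (ℛ k b).index, ∑ j ∈ (ℛ k ((ℛ k b).left i)).index,
          (f ((ℛ k ((ℛ k b).left i)).right j) * g ((ℛ k b).right i)) •
            (ℛ k ((ℛ k b).left i)).left j := by
        refine Finset.sum_congr rfl fun i _ => ?_
        rw [map_smul, windR_apply_of (ℛ k ((ℛ k b).left i)).eq, Finset.smul_sum]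
        refine Finset.sum_congr rfl fun j _ => ?_
        rw [smul_smul, mul_comm]
    _ = ∑ i ∈ (ℛ k b).index, ∑ j ∈ (ℛ k ((ℛ k b).right i)).index,
          (f ((ℛ k ((ℛ k b).right i)).left j) * g ((ℛ k ((ℛ k b).right i)).right j)) •
            (ℛ k b).left i := H2
    _ = ∑ i ∈ (ℛ k b).index, conv f g ((ℛ k b).right i) • (ℛ k b).left i := by
        refine Finset.sum_congr rfl fun i _ => ?_
        rw [conv_apply_of (ℛ k ((ℛ k b).right i)).eq, Finset.sum_smul]

private lemma windL_comp_windL (f g : B →ₗ[k] k) :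
    windL f ∘ₗ windL g = windL (conv g f) := by
  ext b
  have H := Coalgebra.sum_tmul_tmul_eq (R := k) (ℛ k b)
    (fun i => ℛ k ((ℛ k b).left i)) (fun i => ℛ k ((ℛ k b).right i))
  have H2 := congrArg ((TensorProduct.lid k B).toLinearMap ∘ₗ
    TensorProduct.map g ((TensorProduct.lid k B).toLinearMap ∘ₗ
      TensorProduct.map f LinearMap.id)) H
  simp only [map_sum, LinearMap.comp_apply, TensorProduct.map_tmul,
    LinearEquiv.coe_coe, TensorProduct.lid_tmul, LinearMap.id_coe, id_eq] at H2
  rw [LinearMap.comp_apply, windL_apply_of (ℛ k b).eq, map_sum,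
    windL_apply_of (ℛ k b).eq (conv g f)]
  calc ∑ i ∈ (ℛ k b).index, windL f (g ((ℛ k b).left i) • (ℛ k b).right i)
      = ∑ i ∈ (ℛ k b).index, ∑ j ∈ (ℛ k ((ℛ k b).right i)).index,
          g ((ℛ k b).left i) • f ((ℛ k ((ℛ k b).right i)).left j) •
            (ℛ k ((ℛ k b).right i)).right j := by
        refine Finset.sum_congr rfl fun i _ => ?_
        rw [map_smul, windL_apply_of (ℛ k ((ℛ k b).right i)).eq, Finset.smul_sum]
    _ = ∑ i ∈ (ℛ k b).index, ∑ j ∈ (ℛ k ((ℛ k b).left i)).index,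
          g ((ℛ k ((ℛ k b).left i)).left j) • f ((ℛ k ((ℛ k b).left i)).right j) •
            (ℛ k b).right i := H2.symm
    _ = ∑ i ∈ (ℛ k b).index, conv g f ((ℛ k b).left i) • (ℛ k b).right i := by
        refine Finset.sum_congr rfl fun i _ => ?_
        rw [conv_apply_of (ℛ k ((ℛ k b).left i)).eq, Finset.sum_smul]
        exact Finset.sum_congr rfl fun j _ => (smul_smul _ _ _)

private lemma conv_cancel_right {p q : B →ₗ[k] k} (h : conv p q = Coalgebra.counit)
    (X : B →ₗ[k] k) : conv (conv X p) q = X := by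
  rw [conv_assoc, h, conv_counit_right]

private lemma conv_cancel_left {p q : B →ₗ[k] k} (h : conv q p = Coalgebra.counit)
    (X : B →ₗ[k] k) : conv q (conv p X) = X := by
  rw [← conv_assoc, h, conv_counit_left]

private lemma sum_comp_lin {ι : Type*} (S : Finset ι) (f : ι → (B →ₗ[k] B)) (g : B →ₗ[k] B) :
    (∑ t ∈ S, f t) ∘ₗ g = ∑ t ∈ S, f t ∘ₗ g := by
  ext c
  simp

private lemma smul_comp_lin (c : k) (f g : B →ₗ[k] B) : (c • f) ∘ₗ g = c • (f ∘ₗ g) := by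
  ext b
  simp

end CoalgLemmas

private lemma exists_repr {k B : Type*} [CommSemiring k] [AddCommMonoid B] [Module k B]
    {M : Submodule k B} {c : B ⊗[k] B}
    (hc : c ∈ LinearMap.range (TensorProduct.mapIncl M M)) :
    ∃ (n : ℕ) (x y : Fin n → B), (∀ t, x t ∈ M) ∧ (∀ t, y t ∈ M) ∧
      ∑ t, x t ⊗ₜ[k] y t = c := by
  obtain ⟨w, rfl⟩ := hc
  induction w using TensorProduct.induction_on with
  | zero => exact ⟨0, fun _ => 0, fun _ => 0, fun t => t.elim0, fun t => t.elim0, by simp⟩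
  | tmul p q =>
      exact ⟨1, fun _ => (p : B), fun _ => (q : B), fun _ => p.2, fun _ => q.2,
        by simp [TensorProduct.mapIncl]⟩
  | add w₁ w₂ ih1 ih2 =>
      obtain ⟨n, x, y, hx, hy, h⟩ := ih1
      obtain ⟨m, x', y', hx', hy', h'⟩ := ih2
      refine ⟨n + m, Fin.append x x', Fin.append y y', ?_, ?_, ?_⟩
      · intro t
        refine Fin.addCases (fun i => ?_) (fun i => ?_) t
        · rw [Fin.append_left]; exact hx i
        · rw [Fin.append_right]; exact hx' i
      · intro t
        refine Fin.addCases (fun i => ?_) (fun i => ?_) t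
        · rw [Fin.append_left]; exact hy i
        · rw [Fin.append_right]; exact hy' i
      · rw [map_add, ← h, ← h', Fin.sum_univ_add]
        simp [Fin.append_left, Fin.append_right]

section BialgLemmas

variable {k B : Type*} [CommSemiring k] [Semiring B] [Bialgebra k B]

private lemma windR_one (f : B →ₗ[k] k) : windR f (1 : B) = f 1 • 1 := by
  simp [windR, Bialgebra.comul_one, Algebra.TensorProduct.one_def]

private lemma windL_one (f : B →ₗ[k] k) : windL f (1 : B) = f 1 • 1 := by
  simp [windL, Bialgebra.comul_one, Algebra.TensorProduct.one_def]

private lemma conv_apply_one (f g : B →ₗ[k] k) : conv f g (1 : B) = f 1 * g 1 := by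
  simp [conv, Bialgebra.comul_one, Algebra.TensorProduct.one_def]

private lemma counit_comp_mulLeft (c : B) :
    (Coalgebra.counit (R := k)) ∘ₗ LinearMap.mulLeft k c =
      (Coalgebra.counit (R := k) c) • (Coalgebra.counit (R := k) (A := B)) := by
  ext b; simp [Bialgebra.counit_mul]

private lemma comul_mul_of {ι κ : Type*} {S : Finset ι} {T : Finset κ}
    {u v : ι → B} {x y : κ → B} {c d : B}
    (h : ∑ s ∈ S, u s ⊗ₜ[k] v s = Coalgebra.comul c)
    (h' : ∑ i ∈ T, x i ⊗ₜ[k] y i = Coalgebra.comul d) :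
    ∑ p ∈ S ×ˢ T, (u p.1 * x p.2) ⊗ₜ[k] (v p.1 * y p.2) = Coalgebra.comul (c * d) := by
  rw [Bialgebra.comul_mul, ← h, ← h', Finset.sum_mul_sum, Finset.sum_product]
  simp [Algebra.TensorProduct.tmul_mul_tmul]

private lemma conv_comp_mulLeft {ι : Type*} {S : Finset ι} {u v : ι → B} {c : B}
    (h : ∑ s ∈ S, u s ⊗ₜ[k] v s = Coalgebra.comul c) (f g : B →ₗ[k] k) :
    conv f g ∘ₗ LinearMap.mulLeft k c =
      ∑ s ∈ S, conv (f ∘ₗ LinearMap.mulLeft k (u s)) (g ∘ₗ LinearMap.mulLeft k (v s)) := by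
  ext b
  rw [LinearMap.comp_apply, LinearMap.mulLeft_apply,
    conv_apply_of (comul_mul_of h (ℛ k b).eq), Finset.sum_product, LinearMap.sum_apply]
  exact Finset.sum_congr rfl fun s _ => by
    rw [conv_apply_of (ℛ k b).eq]; simp

private lemma windR_comp_mulLeft {ι : Type*} {S : Finset ι} {u v : ι → B} {c : B}
    (h : ∑ s ∈ S, u s ⊗ₜ[k] v s = Coalgebra.comul c) (f : B →ₗ[k] k) :
    windR f ∘ₗ LinearMap.mulLeft k c =
      ∑ s ∈ S, LinearMap.mulLeft k (u s) ∘ₗ windR (f ∘ₗ LinearMap.mulLeft k (v s)) := by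
  ext b
  rw [LinearMap.comp_apply, LinearMap.mulLeft_apply,
    windR_apply_of (comul_mul_of h (ℛ k b).eq), Finset.sum_product, LinearMap.sum_apply]
  refine Finset.sum_congr rfl fun s _ => ?_
  rw [LinearMap.comp_apply, windR_apply_of (ℛ k b).eq, LinearMap.mulLeft_apply,
    Finset.mul_sum]
  exact Finset.sum_congr rfl fun i _ => by
    rw [LinearMap.comp_apply, LinearMap.mulLeft_apply, mul_smul_comm]

private lemma windL_comp_mulLeft {ι : Type*} {S : Finset ι} {u v : ι → B} {c : B}
    (h : ∑ s ∈ S, u s ⊗ₜ[k] v s = Coalgebra.comul c) (f : B →ₗ[k] k) :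
    windL f ∘ₗ LinearMap.mulLeft k c =
      ∑ s ∈ S, LinearMap.mulLeft k (v s) ∘ₗ windL (f ∘ₗ LinearMap.mulLeft k (u s)) := by
  ext b
  rw [LinearMap.comp_apply, LinearMap.mulLeft_apply,
    windL_apply_of (comul_mul_of h (ℛ k b).eq), Finset.sum_product, LinearMap.sum_apply]
  refine Finset.sum_congr rfl fun s _ => ?_
  rw [LinearMap.comp_apply, windL_apply_of (ℛ k b).eq, LinearMap.mulLeft_apply,
    Finset.mul_sum]
  exact Finset.sum_congr rfl fun i _ => by
    rw [LinearMap.comp_apply, LinearMap.mulLeft_apply, mul_smul_comm]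

private lemma key_collect {ι : Type*} (S : Finset ι) (c : ι → k) (w : ι → B)
    (F G : B →ₗ[k] k) :
    conv F (G ∘ₗ LinearMap.mulLeft k (∑ t ∈ S, c t • w t)) =
      ∑ t ∈ S, c t • conv F (G ∘ₗ LinearMap.mulLeft k (w t)) := by
  ext b
  simp only [conv_apply_of (ℛ k b).eq, LinearMap.sum_apply, LinearMap.smul_apply,
    LinearMap.comp_apply, LinearMap.mulLeft_apply, Finset.sum_mul, smul_mul_assoc,
    map_sum, map_smul, smul_eq_mul, Finset.mul_sum]
  rw [Finset.sum_comm]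
  exact Finset.sum_congr rfl fun t _ => Finset.sum_congr rfl fun i _ => by ring

private lemma key_collect' {ι : Type*} (S : Finset ι) (c : ι → k) (w : ι → B)
    (F G : B →ₗ[k] k) :
    conv (G ∘ₗ LinearMap.mulLeft k (∑ t ∈ S, c t • w t)) F =
      ∑ t ∈ S, c t • conv (G ∘ₗ LinearMap.mulLeft k (w t)) F := by
  ext b
  simp only [conv_apply_of (ℛ k b).eq, LinearMap.sum_apply, LinearMap.smul_apply,
    LinearMap.comp_apply, LinearMap.mulLeft_apply, Finset.sum_mul, smul_mul_assoc,
    map_sum, map_smul, smul_eq_mul, Finset.mul_sum]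
  rw [Finset.sum_comm]
  exact Finset.sum_congr rfl fun t _ => Finset.sum_congr rfl fun i _ => by ring

private lemma mulLeft_sum_smul {ι : Type*} (S : Finset ι) (c : ι → k) (w : ι → B) :
    LinearMap.mulLeft k (∑ t ∈ S, c t • w t) =
      ∑ t ∈ S, c t • LinearMap.mulLeft k (w t) := by
  ext b
  simp [Finset.sum_mul, smul_mul_assoc]

end BialgLemmas

set_option maxHeartbeats 1000000 in
theorem statement9 {k B : Type*} [Field k] [Ring B] [Bialgebra k B]
    (𝒜 : ℤ → Submodule k B) [GradedAlgebra 𝒜]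
    (hT2 : ∀ n : ℤ, ∀ b ∈ 𝒜 n,
      Coalgebra.comul (R := k) b ∈ LinearMap.range (TensorProduct.mapIncl (𝒜 n) (𝒜 n)))
    (α αinv : ℤ → (B →ₗ[k] k))
    (hinv : ∀ i : ℤ, conv (α i) (αinv i) = Coalgebra.counit ∧
      conv (αinv i) (α i) = Coalgebra.counit) :
    (IsTwistingFunctionalSystem 𝒜 α ↔ IsTwistingSystem 𝒜 (fun i => windR (α i))) ∧
    (IsTwistingFunctionalSystem 𝒜 α ↔ IsTwistingSystem 𝒜 (fun i => windL (αinv i))) ∧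
    (IsTwistingFunctionalSystem 𝒜 α →
      ∀ i : ℤ,
        windR (α i) ∘ₗ windR (αinv i) = LinearMap.id ∧
        windR (αinv i) ∘ₗ windR (α i) = LinearMap.id ∧
        windL (αinv i) ∘ₗ windL (α i) = LinearMap.id ∧
        windL (α i) ∘ₗ windL (αinv i) = LinearMap.id) := by
  have hc1 : ∀ i, conv (α i) (αinv i) = Coalgebra.counit := fun i => (hinv i).1
  have hc2 : ∀ i, conv (αinv i) (α i) = Coalgebra.counit := fun i => (hinv i).2
  have hRR1 : ∀ i, windR (α i) ∘ₗ windR (αinv i) = LinearMap.id := fun i => by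
    rw [windR_comp_windR, hc1 i, windR_counit]
  have hRR2 : ∀ i, windR (αinv i) ∘ₗ windR (α i) = LinearMap.id := fun i => by
    rw [windR_comp_windR, hc2 i, windR_counit]
  have hLL1 : ∀ i, windL (αinv i) ∘ₗ windL (α i) = LinearMap.id := fun i => by
    rw [windL_comp_windL, hc1 i, windL_counit]
  have hLL2 : ∀ i, windL (α i) ∘ₗ windL (αinv i) = LinearMap.id := fun i => by
    rw [windL_comp_windL, hc2 i, windL_counit]
  have lemP : ∀ (i : ℤ) {ι : Type} {S : Finset ι} {u v : ι → B} {c : B},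
      (∑ s ∈ S, u s ⊗ₜ[k] v s = Coalgebra.comul c) →
      ∑ s ∈ S, conv (α i ∘ₗ LinearMap.mulLeft k (u s)) (αinv i ∘ₗ LinearMap.mulLeft k (v s)) =
        (Coalgebra.counit (R := k) c) • (Coalgebra.counit (R := k) (A := B)) := by
    intro i ι S u v c h
    rw [← conv_comp_mulLeft h, hc1 i, counit_comp_mulLeft]
  have ePR : ∀ (m : ℤ) (c : B), Coalgebra.counit (R := k) (windR (α m) c) = α m c := by
    intro m c
    exact LinearMap.congr_fun
      ((comp_windR Coalgebra.counit (α m)).trans (conv_counit_left (α m))) c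
  have ePL : ∀ (m : ℤ) (c : B), Coalgebra.counit (R := k) (windL (αinv m) c) = αinv m c := by
    intro m c
    exact LinearMap.congr_fun
      ((comp_windL Coalgebra.counit (αinv m)).trans (conv_counit_right (αinv m))) c
  -- main implication: C1 → C1'
  have hmain1 : (∀ (i j : ℤ), ∀ a ∈ 𝒜 j,
        conv (α i ∘ₗ LinearMap.mulLeft k a) (α j) = α i a • α (i + j)) →
      (∀ (i j : ℤ), ∀ a ∈ 𝒜 j,
        conv (αinv j) (αinv i ∘ₗ LinearMap.mulLeft k a) = αinv i a • αinv (i + j)) := by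
    intro hC i j a ha
    have lemD : ∀ w ∈ 𝒜 j,
        conv (αinv (i + j)) (α i ∘ₗ LinearMap.mulLeft k w) = α i w • αinv j := by
      intro w hw
      conv_lhs => rw [← conv_cancel_right (hc1 j) (α i ∘ₗ LinearMap.mulLeft k w)]
      rw [hC i j w hw, conv_smul_left, conv_smul_right, ← conv_assoc, hc2 (i + j),
        conv_counit_left]
    obtain ⟨n, x, y, hx, hy, hxy⟩ := exists_repr (hT2 j a ha)
    choose m u v hu hv huv using fun t => exists_repr (hT2 j (y t) (hy t))
    have ha' : ∑ t, αinv i (x t) • windL (α i) (y t) = a := by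
      have e1 : ∑ t, αinv i (x t) • windL (α i) (y t) =
          windL (α i) (windL (αinv i) a) := by
        rw [windL_apply_of hxy (αinv i), map_sum]
        exact Finset.sum_congr rfl fun t _ => (map_smul _ _ _).symm
      rw [e1, ← LinearMap.comp_apply, hLL2 i, LinearMap.id_apply]
    calc conv (αinv j) (αinv i ∘ₗ LinearMap.mulLeft k a)
        = conv (αinv j) (αinv i ∘ₗ
            LinearMap.mulLeft k (∑ t, αinv i (x t) • windL (α i) (y t))) := by rw [ha']
      _ = ∑ t, αinv i (x t) •
            conv (αinv j) (αinv i ∘ₗ LinearMap.mulLeft k (windL (α i) (y t))) :=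
          key_collect Finset.univ _ _ _ _
      _ = ∑ t, αinv i (x t) •
            conv (αinv j) (αinv i ∘ₗ LinearMap.mulLeft k (∑ s, α i (u t s) • v t s)) := by
          refine Finset.sum_congr rfl fun t _ => ?_
          rw [windL_apply_of (huv t) (α i)]
      _ = ∑ t, αinv i (x t) • ∑ s, α i (u t s) •
            conv (αinv j) (αinv i ∘ₗ LinearMap.mulLeft k (v t s)) := by
          refine Finset.sum_congr rfl fun t _ => ?_
          rw [key_collect]
      _ = ∑ t, αinv i (x t) • ∑ s,
            conv (conv (αinv (i + j)) (α i ∘ₗ LinearMap.mulLeft k (u t s)))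
              (αinv i ∘ₗ LinearMap.mulLeft k (v t s)) := by
          refine Finset.sum_congr rfl fun t _ => ?_
          congr 1
          refine Finset.sum_congr rfl fun s _ => ?_
          rw [lemD (u t s) (hu t s), conv_smul_left]
      _ = ∑ t, αinv i (x t) • conv (αinv (i + j))
            (∑ s, conv (α i ∘ₗ LinearMap.mulLeft k (u t s))
              (αinv i ∘ₗ LinearMap.mulLeft k (v t s))) := by
          refine Finset.sum_congr rfl fun t _ => ?_
          congr 1
          rw [conv_sum_right]
          exact Finset.sum_congr rfl fun s _ => conv_assoc _ _ _
      _ = ∑ t, αinv i (x t) • conv (αinv (i + j))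
            ((Coalgebra.counit (R := k) (y t)) • Coalgebra.counit) := by
          refine Finset.sum_congr rfl fun t _ => ?_
          rw [lemP i (huv t)]
      _ = ∑ t, (αinv i (x t) * Coalgebra.counit (R := k) (y t)) • αinv (i + j) := by
          refine Finset.sum_congr rfl fun t _ => ?_
          rw [conv_smul_right, conv_counit_right, smul_smul]
      _ = αinv i a • αinv (i + j) := by
          rw [← Finset.sum_smul]
          congr 1
          have : ∑ t, αinv i (x t) * Coalgebra.counit (R := k) (y t) =
              αinv i (∑ t, Coalgebra.counit (R := k) (y t) • x t) := by
            rw [map_sum]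
            exact Finset.sum_congr rfl fun t _ => by
              rw [map_smul, smul_eq_mul, mul_comm]
          rw [this, sum_counit_right_smul hxy]
  -- main implication: C1' → C1
  have hmain2 : (∀ (i j : ℤ), ∀ a ∈ 𝒜 j,
        conv (αinv j) (αinv i ∘ₗ LinearMap.mulLeft k a) = αinv i a • αinv (i + j)) →
      (∀ (i j : ℤ), ∀ a ∈ 𝒜 j,
        conv (α i ∘ₗ LinearMap.mulLeft k a) (α j) = α i a • α (i + j)) := by
    intro hC' i j a ha
    have lemD' : ∀ w ∈ 𝒜 j,
        conv (αinv i ∘ₗ LinearMap.mulLeft k w) (α (i + j)) = αinv i w • α j := by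
      intro w hw
      conv_lhs => rw [← conv_cancel_left (hc1 j) (αinv i ∘ₗ LinearMap.mulLeft k w)]
      rw [hC' i j w hw, conv_smul_right, conv_smul_left, conv_assoc, hc2 (i + j),
        conv_counit_right]
    obtain ⟨n, x, y, hx, hy, hxy⟩ := exists_repr (hT2 j a ha)
    choose m u v hu hv huv using fun t => exists_repr (hT2 j (x t) (hx t))
    have ha' : ∑ t, α i (y t) • windR (αinv i) (x t) = a := by
      have e1 : ∑ t, α i (y t) • windR (αinv i) (x t) =
          windR (αinv i) (windR (α i) a) := by
        rw [windR_apply_of hxy (α i), map_sum]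
        exact Finset.sum_congr rfl fun t _ => (map_smul _ _ _).symm
      rw [e1, ← LinearMap.comp_apply, hRR2 i, LinearMap.id_apply]
    calc conv (α i ∘ₗ LinearMap.mulLeft k a) (α j)
        = conv (α i ∘ₗ
            LinearMap.mulLeft k (∑ t, α i (y t) • windR (αinv i) (x t))) (α j) := by rw [ha']
      _ = ∑ t, α i (y t) •
            conv (α i ∘ₗ LinearMap.mulLeft k (windR (αinv i) (x t))) (α j) :=
          key_collect' Finset.univ _ _ _ _
      _ = ∑ t, α i (y t) •
            conv (α i ∘ₗ LinearMap.mulLeft k (∑ s, αinv i (v t s) • u t s)) (α j) := by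
          refine Finset.sum_congr rfl fun t _ => ?_
          rw [windR_apply_of (huv t) (αinv i)]
      _ = ∑ t, α i (y t) • ∑ s, αinv i (v t s) •
            conv (α i ∘ₗ LinearMap.mulLeft k (u t s)) (α j) := by
          refine Finset.sum_congr rfl fun t _ => ?_
          rw [key_collect']
      _ = ∑ t, α i (y t) • ∑ s,
            conv (α i ∘ₗ LinearMap.mulLeft k (u t s))
              (conv (αinv i ∘ₗ LinearMap.mulLeft k (v t s)) (α (i + j))) := by
          refine Finset.sum_congr rfl fun t _ => ?_
          congr 1
          refine Finset.sum_congr rfl fun s _ => ?_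
          rw [lemD' (v t s) (hv t s), conv_smul_right]
      _ = ∑ t, α i (y t) • conv
            (∑ s, conv (α i ∘ₗ LinearMap.mulLeft k (u t s))
              (αinv i ∘ₗ LinearMap.mulLeft k (v t s))) (α (i + j)) := by
          refine Finset.sum_congr rfl fun t _ => ?_
          congr 1
          rw [conv_sum_left]
          exact Finset.sum_congr rfl fun s _ => (conv_assoc _ _ _).symm
      _ = ∑ t, α i (y t) • conv
            ((Coalgebra.counit (R := k) (x t)) • Coalgebra.counit) (α (i + j)) := by
          refine Finset.sum_congr rfl fun t _ => ?_
          rw [lemP i (huv t)]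
      _ = ∑ t, (α i (y t) * Coalgebra.counit (R := k) (x t)) • α (i + j) := by
          refine Finset.sum_congr rfl fun t _ => ?_
          rw [conv_smul_left, conv_counit_left, smul_smul]
      _ = α i a • α (i + j) := by
          rw [← Finset.sum_smul]
          congr 1
          have : ∑ t, α i (y t) * Coalgebra.counit (R := k) (x t) =
              α i (∑ t, Coalgebra.counit (R := k) (x t) • y t) := by
            rw [map_sum]
            exact Finset.sum_congr rfl fun t _ => by
              rw [map_smul, smul_eq_mul, mul_comm]
          rw [this, sum_counit_left_smul hxy]
  -- forward R
  have fwdR : IsTwistingFunctionalSystem 𝒜 α → IsTwistingSystem 𝒜 (fun i => windR (α i)) := by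
    intro h1
    obtain ⟨-, h1one, h1zero, h1cond⟩ := h1
    have hCmap : ∀ (i j : ℤ), ∀ a ∈ 𝒜 j,
        conv (α i ∘ₗ LinearMap.mulLeft k a) (α j) = α i a • α (i + j) := by
      intro i j a ha; ext b
      simpa [smul_eq_mul] using h1cond i j a ha b
    refine ⟨fun i => ?_, fun i n a ha => ?_, ?_, fun i => ?_, fun i j a ha b => ?_⟩
    · exact Function.bijective_iff_has_inverse.mpr ⟨windR (αinv i),
        fun c => by simpa using LinearMap.congr_fun (hRR2 i) c,
        fun c => by simpa using LinearMap.congr_fun (hRR1 i) c⟩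
    · obtain ⟨nn, x, y, hx, hy, hxy⟩ := exists_repr (hT2 n a ha)
      show windR (α i) a ∈ 𝒜 n
      rw [windR_apply_of hxy]
      exact Submodule.sum_mem _ fun t _ => Submodule.smul_mem _ _ (hx t)
    · show windR (α 0) = LinearMap.id
      rw [h1zero, windR_counit]
    · show windR (α i) 1 = 1
      rw [windR_one, h1one i, one_smul]
    · obtain ⟨nn, x, y, hx, hy, hxy⟩ := exists_repr (hT2 j a ha)
      have Hmap : (windR (α i) ∘ₗ LinearMap.mulLeft k a) ∘ₗ windR (α j) =
          LinearMap.mulLeft k (windR (α i) a) ∘ₗ windR (α (i + j)) := by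
        rw [windR_comp_mulLeft hxy (α i), sum_comp_lin]
        calc ∑ t, (LinearMap.mulLeft k (x t) ∘ₗ
              windR (α i ∘ₗ LinearMap.mulLeft k (y t))) ∘ₗ windR (α j)
            = ∑ t, α i (y t) • (LinearMap.mulLeft k (x t) ∘ₗ windR (α (i + j))) := by
              refine Finset.sum_congr rfl fun t _ => ?_
              rw [LinearMap.comp_assoc, windR_comp_windR, hCmap i j (y t) (hy t), windR_smul]
              ext c; simp
          _ = LinearMap.mulLeft k (windR (α i) a) ∘ₗ windR (α (i + j)) := by
              rw [windR_apply_of hxy (α i), mulLeft_sum_smul, sum_comp_lin]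
              exact Finset.sum_congr rfl fun t _ => (smul_comp_lin _ _ _).symm
      show windR (α i) (a * windR (α j) b) = windR (α i) a * windR (α (i + j)) b
      simpa using LinearMap.congr_fun Hmap b
  -- backward R
  have bwdR : IsTwistingSystem 𝒜 (fun i => windR (α i)) → IsTwistingFunctionalSystem 𝒜 α := by
    intro h2
    obtain ⟨-, -, h2zero, h2one, h2rel⟩ := h2
    refine ⟨fun i => ⟨αinv i, hinv i⟩, fun i => ?_, ?_, fun i j a ha b => ?_⟩
    · have e : windR (α i) 1 = 1 := h2one i
      rw [windR_one] at e
      have e2 := congrArg (Coalgebra.counit (R := k)) e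
      simpa using e2
    · have e : windR (α 0) = LinearMap.id := h2zero
      calc α 0 = conv Coalgebra.counit (α 0) := (conv_counit_left _).symm
        _ = Coalgebra.counit ∘ₗ windR (α 0) := (comp_windR _ _).symm
        _ = Coalgebra.counit := by rw [e, LinearMap.comp_id]
    · have hb : conv (α i ∘ₗ LinearMap.mulLeft k a) (α j) b =
          α i (a * windR (α j) b) := by
        rw [← comp_windR (α i ∘ₗ LinearMap.mulLeft k a) (α j)]; rfl
      have hr := h2rel i j a ha b
      simp only [] at hr
      rw [hb, ← ePR i, hr, Bialgebra.counit_mul, ePR, ePR]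
  -- forward L
  have fwdL : IsTwistingFunctionalSystem 𝒜 α →
      IsTwistingSystem 𝒜 (fun i => windL (αinv i)) := by
    intro h1
    obtain ⟨-, h1one, h1zero, h1cond⟩ := h1
    have hCmap : ∀ (i j : ℤ), ∀ a ∈ 𝒜 j,
        conv (α i ∘ₗ LinearMap.mulLeft k a) (α j) = α i a • α (i + j) := by
      intro i j a ha; ext b
      simpa [smul_eq_mul] using h1cond i j a ha b
    have hC' := hmain1 hCmap
    have hαinv0 : αinv 0 = Coalgebra.counit := by
      have e := hc1 0
      rw [h1zero, conv_counit_left] at e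
      exact e
    have hαinv1 : ∀ i, αinv i (1 : B) = 1 := by
      intro i'
      have e := LinearMap.congr_fun (hc1 i') (1 : B)
      rw [conv_apply_one, h1one i', one_mul] at e
      simpa using e
    refine ⟨fun i => ?_, fun i n a ha => ?_, ?_, fun i => ?_, fun i j a ha b => ?_⟩
    · exact Function.bijective_iff_has_inverse.mpr ⟨windL (α i),
        fun c => by simpa using LinearMap.congr_fun (hLL2 i) c,
        fun c => by simpa using LinearMap.congr_fun (hLL1 i) c⟩
    · obtain ⟨nn, x, y, hx, hy, hxy⟩ := exists_repr (hT2 n a ha)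
      show windL (αinv i) a ∈ 𝒜 n
      rw [windL_apply_of hxy]
      exact Submodule.sum_mem _ fun t _ => Submodule.smul_mem _ _ (hy t)
    · show windL (αinv 0) = LinearMap.id
      rw [hαinv0, windL_counit]
    · show windL (αinv i) 1 = 1
      rw [windL_one, hαinv1 i, one_smul]
    · obtain ⟨nn, x, y, hx, hy, hxy⟩ := exists_repr (hT2 j a ha)
      have Hmap : (windL (αinv i) ∘ₗ LinearMap.mulLeft k a) ∘ₗ windL (αinv j) =
          LinearMap.mulLeft k (windL (αinv i) a) ∘ₗ windL (αinv (i + j)) := by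
        rw [windL_comp_mulLeft hxy (αinv i), sum_comp_lin]
        calc ∑ t, (LinearMap.mulLeft k (y t) ∘ₗ
              windL (αinv i ∘ₗ LinearMap.mulLeft k (x t))) ∘ₗ windL (αinv j)
            = ∑ t, αinv i (x t) • (LinearMap.mulLeft k (y t) ∘ₗ windL (αinv (i + j))) := by
              refine Finset.sum_congr rfl fun t _ => ?_
              rw [LinearMap.comp_assoc, windL_comp_windL, hC' i j (x t) (hx t), windL_smul]
              ext c; simp
          _ = LinearMap.mulLeft k (windL (αinv i) a) ∘ₗ windL (αinv (i + j)) := by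
              rw [windL_apply_of hxy (αinv i), mulLeft_sum_smul, sum_comp_lin]
              exact Finset.sum_congr rfl fun t _ => (smul_comp_lin _ _ _).symm
      show windL (αinv i) (a * windL (αinv j) b) =
        windL (αinv i) a * windL (αinv (i + j)) b
      simpa using LinearMap.congr_fun Hmap b
  -- backward L
  have bwdL : IsTwistingSystem 𝒜 (fun i => windL (αinv i)) →
      IsTwistingFunctionalSystem 𝒜 α := by
    intro h3
    obtain ⟨-, -, h3zero, h3one, h3rel⟩ := h3
    have hαinv1 : ∀ i, αinv i (1 : B) = 1 := by
      intro i
      have e : windL (αinv i) 1 = 1 := h3one i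
      rw [windL_one] at e
      have e2 := congrArg (Coalgebra.counit (R := k)) e
      simpa using e2
    have hα1 : ∀ i, α i (1 : B) = 1 := by
      intro i
      have e := LinearMap.congr_fun (hc1 i) (1 : B)
      rw [conv_apply_one, hαinv1 i, mul_one] at e
      simpa using e
    have hαinv0 : αinv 0 = Coalgebra.counit := by
      have e : windL (αinv 0) = LinearMap.id := h3zero
      calc αinv 0 = conv (αinv 0) Coalgebra.counit := (conv_counit_right _).symm
        _ = Coalgebra.counit ∘ₗ windL (αinv 0) := (comp_windL _ _).symm
        _ = Coalgebra.counit := by rw [e, LinearMap.comp_id]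
    have hα0 : α 0 = Coalgebra.counit := by
      have e := hc1 0
      rw [hαinv0, conv_counit_right] at e
      exact e
    have hC' : ∀ (i j : ℤ), ∀ a ∈ 𝒜 j,
        conv (αinv j) (αinv i ∘ₗ LinearMap.mulLeft k a) = αinv i a • αinv (i + j) := by
      intro i j a ha; ext b
      have hb : conv (αinv j) (αinv i ∘ₗ LinearMap.mulLeft k a) b =
          αinv i (a * windL (αinv j) b) := by
        rw [← comp_windL (αinv i ∘ₗ LinearMap.mulLeft k a) (αinv j)]; rfl
      have hr := h3rel i j a ha b
      simp only [] at hr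
      rw [hb, ← ePL i, hr, Bialgebra.counit_mul, ePL, ePL, LinearMap.smul_apply,
        smul_eq_mul]
    have hCmap := hmain2 hC'
    exact ⟨fun i => ⟨αinv i, hinv i⟩, hα1, hα0, fun i j a ha b => by
      simpa [smul_eq_mul] using LinearMap.congr_fun (hCmap i j a ha) b⟩
  exact ⟨⟨fwdR, bwdR⟩, ⟨fwdL, bwdL⟩, fun _ i => ⟨hRR1 i, hRR2 i, hLL1 i, hLL2 i⟩⟩
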